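/- For every n ≥ 1 and every deterministic learning strategy for one-to-one matching markets of size n in the coarse query model, there exist a preference profile in which all n women have the same preference order over the men, and a run of the strategy against an adversary revealing valid blocking pairs under that profile, such that none of the first n(n−1)/2 matchings proposed by the strategy is stable. -/

import Mathlib

/-- A preference profile in a one-to-one matching market of size `n`: for each woman
`w`, a rank permutation `P.w w` over the men (lower rank = more preferred), and for
each man `m`, a rank permutation `P.m m` over the women. -/
structure Prefs (n : ℕ) where
  w : Fin n → Equiv.Perm (Fin n)
  m : Fin n → Equiv.Perm (Fin n)

/-- A matching is a bijection `M` from women to men.  The pair `(w, m)` blocks `M`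
if `M w ≠ m`, woman `w` prefers `m` to her partner `M w`, and man `m` prefers `w`
to his partner `M.symm m`. -/
def Blocks {n : ℕ} (P : Prefs n) (M : Equiv.Perm (Fin n)) (w m : Fin n) : Prop :=
  M w ≠ m ∧ P.w w m < P.w w (M w) ∧ P.m m w < P.m m (M.symm m)

/-- A matching is stable if no pair blocks it. -/
def IsStable {n : ℕ} (P : Prefs n) (M : Equiv.Perm (Fin n)) : Prop :=
  ∀ w m : Fin n, ¬ Blocks P M w m

/-- A history: a list of (proposed matching, revealed blocking pair) entries. -/
abbrev Hist (n : ℕ) := List (Equiv.Perm (Fin n) × (Fin n × Fin n))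

/-- A deterministic learning strategy maps every history to a next proposed matching. -/
abbrev Strategy (n : ℕ) := Hist n → Equiv.Perm (Fin n)

/-- An adversary maps a history and a proposed matching to a revealed pair. -/
abbrev Adversary (n : ℕ) := Hist n → Equiv.Perm (Fin n) → Fin n × Fin n

/-- An adversary is valid for profile `P` if, whenever the proposed matching is
unstable, it reveals a blocking pair of that matching. -/
def ValidAdv {n : ℕ} (P : Prefs n) (adv : Adversary n) : Prop :=
  ∀ (h : Hist n) (M : Equiv.Perm (Fin n)), ¬ IsStable P M →
    Blocks P M (adv h M).1 (adv h M).2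

/-- The history after `t` rounds of the run of strategy `S` against adversary `adv`. -/
def runHist {n : ℕ} (S : Strategy n) (adv : Adversary n) : ℕ → Hist n
  | 0 => []
  | t + 1 =>
    let h := runHist S adv t
    h ++ [(S h, adv h (S h))]

/-- The `t`-th matching (0-indexed) proposed in the run of `S` against `adv`. -/
def proposal {n : ℕ} (S : Strategy n) (adv : Adversary n) (t : ℕ) :
    Equiv.Perm (Fin n) :=
  S (runHist S adv t)

/-- for every `n ≥ 1` and every deterministic learning strategy for
one-to-one matching markets of size `n` in the coarse query model, there exist a
preference profile in which all women share the same preference order over the men,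
and a valid adversary for that profile, such that none of the first `n(n−1)/2`
matchings proposed by the strategy in the resulting run is stable. -/
def Wrap (n : ℕ) : Type := Fin n

namespace Stmt7Aux
open Relation Finset
open scoped Classical

variable {n : ℕ}

variable {n : ℕ}

def erel (E : Finset (Fin n × Fin n × Fin n)) (m : Fin n) (a b : Fin n) : Prop :=
  (m, a, b) ∈ E

def Inv (E : Finset (Fin n × Fin n × Fin n)) : Prop :=
  ∀ m a b, (m, a, b) ∈ E → ¬ ReflTransGen (erel E m) b a

def Good (E : Finset (Fin n × Fin n × Fin n)) (M : Equiv.Perm (Fin n))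
    (p : Fin n × Fin n) : Prop :=
  (p.2 : ℕ) < (M p.1 : ℕ) ∧ ¬ ReflTransGen (erel E p.2) (M.symm p.2) p.1

lemma reach_card (F : Finset (Fin n × Fin n)) (v : Fin n) :
    (univ.filter fun w => w ≠ v ∧ ReflTransGen (fun a b => (a, b) ∈ F) v w).card
      ≤ F.card := by
  have hex : ∀ w ∈ univ.filter fun w => w ≠ v ∧
      ReflTransGen (fun a b => (a, b) ∈ F) v w, ∃ u, (u, w) ∈ F := by
    intro w hw
    simp only [mem_filter, mem_univ, true_and] at hw
    rcases hw.2.cases_tail with h | ⟨c, _, hcw⟩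
    · exact absurd h hw.1
    · exact ⟨c, hcw⟩
  set f : Fin n → Fin n × Fin n := fun w =>
    if h : ∃ u, (u, w) ∈ F then (h.choose, w) else (v, v) with hf
  apply Finset.card_le_card_of_injOn f
  · intro w hw
    have h := hex w hw
    simp only [hf, dif_pos h]
    exact h.choose_spec
  · intro a ha b hb hab
    have h1 := hex a (by simpa using ha)
    have h2 := hex b (by simpa using hb)
    simp only [hf, dif_pos h1, dif_pos h2, Prod.mk.injEq] at hab
    exact hab.2

lemma good_exists (M : Equiv.Perm (Fin n))
    (E : Finset (Fin n × Fin n × Fin n)) (hE : E.card < n * (n - 1) / 2) :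
    ∃ p : Fin n × Fin n, Good E M p := by
  by_contra hno
  push_neg at hno
  have hforced : ∀ (w m : Fin n), (m : ℕ) < (M w : ℕ) →
      ReflTransGen (erel E m) (M.symm m) w := by
    intro w m hlt
    have := hno (w, m)
    rw [Good] at this
    push_neg at this
    exact this hlt
  have key : ∀ m : Fin n, n - 1 - (m : ℕ) ≤ (E.filter fun x => x.1 = m).card := by
    intro m
    set F : Finset (Fin n × Fin n) :=
      (E.filter fun x => x.1 = m).image fun x => (x.2.1, x.2.2) with hF
    have hFmem : ∀ a b : Fin n, ((a, b) ∈ F ↔ (m, a, b) ∈ E) := by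
      intro a b
      simp only [hF, mem_image, mem_filter, Prod.mk.injEq]
      constructor
      · rintro ⟨⟨m', a', b'⟩, ⟨hE', rfl⟩, h1, h2⟩
        simpa [← h1, ← h2] using hE'
      · intro h; exact ⟨(m, a, b), ⟨h, rfl⟩, rfl, rfl⟩
    have hrel : (fun a b : Fin n => (a, b) ∈ F) = erel E m := by
      funext a b; exact propext (hFmem a b)
    have hsub : (univ.filter fun w : Fin n => (m : ℕ) < (M w : ℕ)) ⊆
        univ.filter fun w => w ≠ M.symm m ∧
          ReflTransGen (fun a b => (a, b) ∈ F) (M.symm m) w := by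
      intro w hw
      simp only [mem_filter, mem_univ, true_and] at hw ⊢
      constructor
      · intro h
        rw [h] at hw
        simp at hw
      · rw [hrel]
        exact hforced w m hw
    have hcard1 : (univ.filter fun w : Fin n => (m : ℕ) < (M w : ℕ)).card
        = n - 1 - (m : ℕ) := by
      have himg : (univ.filter fun w : Fin n => (m : ℕ) < (M w : ℕ)) =
          (Finset.Ioi m).image M.symm := by
        ext w
        simp only [mem_filter, mem_univ, true_and, mem_image, Finset.mem_Ioi]
        constructor
        · intro h
          exact ⟨M w, h, M.symm_apply_apply w⟩
        · rintro ⟨m', hm', rfl⟩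
          simpa using hm'
      rw [himg, Finset.card_image_of_injective _ M.symm.injective, Fin.card_Ioi]
    calc n - 1 - (m : ℕ) = (univ.filter fun w : Fin n => (m : ℕ) < (M w : ℕ)).card :=
          hcard1.symm
      _ ≤ _ := Finset.card_le_card hsub
      _ ≤ F.card := reach_card F (M.symm m)
      _ ≤ (E.filter fun x => x.1 = m).card := Finset.card_image_le
  have hsum : E.card = ∑ m : Fin n, (E.filter fun x => x.1 = m).card :=
    Finset.card_eq_sum_card_fiberwise (fun x _ => Finset.mem_univ x.1)
  have hge : n * (n - 1) / 2 ≤ E.card := by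
    rw [hsum]
    calc n * (n - 1) / 2 = ∑ k ∈ Finset.range n, k := (Finset.sum_range_id n).symm
      _ = ∑ k ∈ Finset.range n, (n - 1 - k) := (Finset.sum_range_reflect id n).symm
      _ = ∑ m : Fin n, (n - 1 - (m : ℕ)) := (Fin.sum_univ_eq_sum_range _ n).symm
      _ ≤ _ := Finset.sum_le_sum fun m _ => key m
  omega

lemma decomp {α : Type*} {e : α → α → Prop} {w p : α} (hpw : ¬ ReflTransGen e p w)
    {a b : α} (h : ReflTransGen (fun x y => e x y ∨ (x = w ∧ y = p)) a b) :
    ReflTransGen e a b ∨ (ReflTransGen e a w ∧ ReflTransGen e p b) := by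
  induction h with
  | refl => exact Or.inl .refl
  | tail hac hcb ih =>
    rcases hcb with hcb | ⟨rfl, rfl⟩
    · rcases ih with ih | ⟨h1, h2⟩
      · exact Or.inl (ih.tail hcb)
      · exact Or.inr ⟨h1, h2.tail hcb⟩
    · rcases ih with ih | ⟨h1, h2⟩
      · exact Or.inr ⟨ih, .refl⟩
      · exact absurd h2 hpw

lemma inv_insert {E : Finset (Fin n × Fin n × Fin n)} (hInv : Inv E)
    {m w p : Fin n} (hpw : ¬ ReflTransGen (erel E m) p w) :
    Inv (insert (m, w, p) E) := by
  have hrel : erel (insert (m, w, p) E) m =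
      fun a b => erel E m a b ∨ (a = w ∧ b = p) := by
    funext a b
    simp only [erel, Finset.mem_insert, Prod.mk.injEq, true_and]
    exact propext (by tauto)
  have hrel' : ∀ m' : Fin n, m' ≠ m → erel (insert (m, w, p) E) m' = erel E m' := by
    intro m' hm'
    funext a b
    simp only [erel, Finset.mem_insert, Prod.mk.injEq]
    exact propext ⟨fun h => h.elim (fun h' => absurd h'.1 hm') id, Or.inr⟩
  intro m' a b hmem
  by_cases hm' : m' = m
  · subst hm'
    rw [hrel] at *
    rw [Finset.mem_insert, Prod.mk.injEq, Prod.mk.injEq] at hmem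
    intro hrt
    rcases decomp hpw hrt with hba | ⟨h1, h2⟩
    · rcases hmem with ⟨_, rfl, rfl⟩ | hmem
      · exact hpw hba
      · exact hInv m' a b hmem hba
    · rcases hmem with ⟨_, rfl, rfl⟩ | hmem
      · exact hpw h2
      · -- e a b in E, h1 : b →* w, h2 : p →* a ; then p →* a → b →* w contradiction
        exact hpw ((h2.tail hmem).trans h1)
  · rw [hrel' m' hm'] at *
    rw [Finset.mem_insert, Prod.mk.injEq] at hmem
    rcases hmem with ⟨h1, _⟩ | hmem
    · exact absurd h1 hm'
    · exact hInv m' a b hmem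

lemma inv_antisymm {E : Finset (Fin n × Fin n × Fin n)} (hInv : Inv E) (m : Fin n)
    {a b : Fin n} (h1 : ReflTransGen (erel E m) a b)
    (h2 : ReflTransGen (erel E m) b a) : a = b := by
  rcases h1.cases_head with h | ⟨c, hac, hcb⟩
  · exact h
  · exact absurd (hcb.trans h2) (hInv m a c hac)

lemma linearize {E : Finset (Fin n × Fin n × Fin n)} (hInv : Inv E) (m : Fin n) :
    ∃ ρ : Equiv.Perm (Fin n), ∀ a b : Fin n, (m, a, b) ∈ E → ρ a < ρ b := by
  haveI hpo : IsPartialOrder (Fin n) (ReflTransGen (erel E m)) :=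
    { refl := fun _ => .refl
      trans := fun _ _ _ h1 h2 => h1.trans h2
      antisymm := fun _ _ h1 h2 => inv_antisymm hInv m h1 h2 }
  obtain ⟨s, hs, hrs⟩ := extend_partialOrder (ReflTransGen (erel E m))
  haveI := hs
  set t : Fin n → Fin n → Prop := fun a b => s a b ∧ a ≠ b with ht
  haveI hsto : IsStrictTotalOrder (Fin n) t :=
    { trichotomous := fun a b => by
        by_cases hab : a = b
        · exact fun _ _ => hab
        · rcases total_of s a b with h | h
          · exact fun h1 _ => (h1 ⟨h, hab⟩).elim
          · exact fun _ h2 => (h2 ⟨h, Ne.symm hab⟩).elim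
      irrefl := fun a h => h.2 rfl
      trans := fun a b c h1 h2 =>
        ⟨_root_.trans h1.1 h2.1, by
          rintro rfl
          exact h1.2 (antisymm h1.1 h2.1)⟩ }
  letI F : Fintype (Wrap n) := (inferInstance : Fintype (Fin n))
  letI L : LinearOrder (Wrap n) := @linearOrderOfSTO (Wrap n) t hsto (Classical.decRel t)
  have hcard : @Fintype.card (Wrap n) F = n := Fintype.card_fin n
  let ι := @monoEquivOfFin (Wrap n) F L n hcard
  refine ⟨(ι.symm.toEquiv : Equiv.Perm (Fin n)), ?_⟩
  intro a b hmem
  have hab : t a b := by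
    refine ⟨hrs _ _ (ReflTransGen.single hmem), ?_⟩
    rintro rfl
    exact hInv m a a hmem .refl
  exact ι.symm.lt_iff_lt.mpr hab


variable (hn : 1 ≤ n) (S : Strategy n)

open Classical in
noncomputable def stepP (E : Finset (Fin n × Fin n × Fin n)) (M : Equiv.Perm (Fin n)) :
    (Fin n × Fin n) × Finset (Fin n × Fin n × Fin n) :=
  if h : ∃ p : Fin n × Fin n, Good E M p then
    (h.choose, insert (h.choose.2, h.choose.1, M.symm h.choose.2) E)
  else ((⟨0, hn⟩, ⟨0, hn⟩), E)

noncomputable def st : ℕ → Hist n × Finset (Fin n × Fin n × Fin n)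
  | 0 => ([], ∅)
  | t + 1 =>
    ((st t).1 ++ [(S (st t).1, (stepP hn (st t).2 (S (st t).1)).1)],
     (stepP hn (st t).2 (S (st t).1)).2)

lemma st_len (t : ℕ) : ((st hn S t).1).length = t := by
  induction t with
  | zero => rfl
  | succ t ih => simp [st, ih]

lemma st_card (t : ℕ) : ((st hn S t).2).card ≤ t := by
  induction t with
  | zero => simp [st]
  | succ t ih =>
    show ((stepP hn (st hn S t).2 (S (st hn S t).1)).2).card ≤ t + 1
    rw [stepP]
    split_ifs with h
    · exact le_trans (Finset.card_insert_le _ _) (by omega)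
    · exact le_trans ih (Nat.le_succ t)

lemma st_inv (t : ℕ) : Inv (st hn S t).2 := by
  induction t with
  | zero => intro m a b hmem; simp [st] at hmem
  | succ t ih =>
    show Inv (stepP hn (st hn S t).2 (S (st hn S t).1)).2
    rw [stepP]
    split_ifs with h
    · exact inv_insert ih h.choose_spec.2
    · exact ih

lemma st_mono {t t' : ℕ} (htt' : t ≤ t') : (st hn S t).2 ⊆ (st hn S t').2 := by
  induction t' with
  | zero => rw [Nat.le_zero.mp htt']
  | succ t' ih =>
    rcases Nat.lt_or_ge t (t' + 1) with h | h
    · refine (ih (by omega)).trans ?_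
      show (st hn S t').2 ⊆ (stepP hn (st hn S t').2 (S (st hn S t').1)).2
      rw [stepP]
      split_ifs with h
      · exact Finset.subset_insert _ _
      · exact subset_rfl
    · rw [le_antisymm htt' h]

lemma st_good {t : ℕ} (ht : t < n * (n - 1) / 2) :
    Good (st hn S t).2 (S (st hn S t).1)
      ((stepP hn (st hn S t).2 (S (st hn S t).1)).1) ∧
    ((stepP hn (st hn S t).2 (S (st hn S t).1)).1.2,
     (stepP hn (st hn S t).2 (S (st hn S t).1)).1.1,
     (S (st hn S t).1).symm (stepP hn (st hn S t).2 (S (st hn S t).1)).1.2)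
      ∈ (st hn S (t + 1)).2 := by
  have hex : ∃ p : Fin n × Fin n, Good (st hn S t).2 (S (st hn S t).1) p :=
    good_exists _ _ (lt_of_le_of_lt (st_card hn S t) ht)
  constructor
  · rw [stepP, dif_pos hex]
    exact hex.choose_spec
  · show _ ∈ (stepP hn (st hn S t).2 (S (st hn S t).1)).2
    rw [stepP, dif_pos hex]
    exact Finset.mem_insert_self _ _

open Classical in
noncomputable def adv (P : Prefs n) : Adversary n := fun h M =>
  if h = (st hn S h.length).1 ∧ M = S (st hn S h.length).1 ∧
      h.length < n * (n - 1) / 2 then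
    (stepP hn (st hn S h.length).2 (S (st hn S h.length).1)).1
  else if hb : ∃ p : Fin n × Fin n, Blocks P M p.1 p.2 then hb.choose
  else (⟨0, hn⟩, ⟨0, hn⟩)

end Stmt7Aux

theorem stmt7 (n : ℕ) (hn : 1 ≤ n) (S : Strategy n) :
    ∃ P : Prefs n, (∀ w w' : Fin n, P.w w = P.w w') ∧
      ∃ adv : Adversary n, ValidAdv P adv ∧
        ∀ t : ℕ, t < n * (n - 1) / 2 → ¬ IsStable P (proposal S adv t) := by
  classical
  set N := n * (n - 1) / 2 with hN
  have hInv : Stmt7Aux.Inv (Stmt7Aux.st hn S N).2 := Stmt7Aux.st_inv hn S N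
  choose ρ hρ using fun m => Stmt7Aux.linearize hInv m
  set P : Prefs n := ⟨fun _ => 1, ρ⟩ with hP
  -- the planned answers block the planned proposals
  have hblock : ∀ t : ℕ, t < N →
      Blocks P (S (Stmt7Aux.st hn S t).1)
        ((Stmt7Aux.stepP hn (Stmt7Aux.st hn S t).2 (S (Stmt7Aux.st hn S t).1)).1.1)
        ((Stmt7Aux.stepP hn (Stmt7Aux.st hn S t).2 (S (Stmt7Aux.st hn S t).1)).1.2) := by
    intro t ht
    obtain ⟨hgood, hmem⟩ := Stmt7Aux.st_good hn S ht
    set M := S (Stmt7Aux.st hn S t).1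
    set p := (Stmt7Aux.stepP hn (Stmt7Aux.st hn S t).2 M).1
    obtain ⟨hlt, -⟩ := hgood
    have hmemN : (p.2, p.1, M.symm p.2) ∈ (Stmt7Aux.st hn S N).2 :=
      Stmt7Aux.st_mono hn S (by omega) hmem
    refine ⟨Fin.ne_of_val_ne (ne_of_gt hlt), ?_, ?_⟩
    · show (1 : Equiv.Perm (Fin n)) p.2 < (1 : Equiv.Perm (Fin n)) (M p.1)
      simpa using hlt
    · exact hρ p.2 p.1 (M.symm p.2) hmemN
  refine ⟨P, fun w w' => rfl, Stmt7Aux.adv hn S P, ?_, ?_⟩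
  · -- validity
    intro h M hM
    rw [Stmt7Aux.adv]
    split_ifs with hc hb
    · obtain ⟨h1, h2, h3⟩ := hc
      rw [h2]
      exact hblock h.length h3
    · exact hb.choose_spec
    · exfalso
      apply hM
      intro w m hwm
      exact hb ⟨(w, m), hwm⟩
  · -- the run follows the plan
    have run_eq : ∀ t : ℕ, t ≤ N →
        runHist S (Stmt7Aux.adv hn S P) t = (Stmt7Aux.st hn S t).1 := by
      intro t ht
      induction t with
      | zero => rfl
      | succ t ih =>
        have ih' := ih (by omega)
        show (runHist S (Stmt7Aux.adv hn S P) t) ++ _ = _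
        rw [ih']
        have hlen : ((Stmt7Aux.st hn S t).1).length = t := Stmt7Aux.st_len hn S t
        have hcond : (Stmt7Aux.st hn S t).1 =
              (Stmt7Aux.st hn S ((Stmt7Aux.st hn S t).1).length).1 ∧
            S (Stmt7Aux.st hn S t).1 =
              S (Stmt7Aux.st hn S ((Stmt7Aux.st hn S t).1).length).1 ∧
            ((Stmt7Aux.st hn S t).1).length < N := by
          rw [hlen]
          exact ⟨rfl, rfl, by omega⟩
        rw [Stmt7Aux.adv, if_pos hcond, hlen]
        rfl
    intro t ht hstable
    have : proposal S (Stmt7Aux.adv hn S P) t = S (Stmt7Aux.st hn S t).1 := by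
      rw [proposal, run_eq t (by omega)]
    rw [this] at hstable
    exact hstable _ _ (hblock t ht)
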